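/- Let x̂₁, x̂₂ : [0,1] → [0,1] be strictly increasing, continuous, with ∫₀¹ (x̂₁(q) + x̂₂(q)) dq = 1 and x̂₂(x̂₁(q)) ≤ q for all q. Then x̂₂(x̂₁(q)) = q for all q, i.e., x̂₂ is the inverse function of x̂₁. -/

import Mathlib

open MeasureTheory intervalIntegral

/-- If the item is always sold (`∫₀¹(x̂₁ + x̂₂) = 1`) and `x̂₂(x̂₁(q)) ≤ q` for all `q`,
then the inequality is an equality: `x̂₂` is the inverse of `x̂₁`. -/
theorem always_sold_implies_inverse
    (x1 x2 : ℝ → ℝ)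
    (hx1mono : StrictMonoOn x1 (Set.Icc 0 1))
    (hx2mono : StrictMonoOn x2 (Set.Icc 0 1))
    (hx1cont : ContinuousOn x1 (Set.Icc 0 1))
    (hx2cont : ContinuousOn x2 (Set.Icc 0 1))
    (hx1maps : ∀ q ∈ Set.Icc (0:ℝ) 1, x1 q ∈ Set.Icc (0:ℝ) 1)
    (hx2maps : ∀ q ∈ Set.Icc (0:ℝ) 1, x2 q ∈ Set.Icc (0:ℝ) 1)
    (hsold : (∫ q in (0:ℝ)..1, (x1 q + x2 q)) = 1)
    (hcond : ∀ q ∈ Set.Icc (0:ℝ) 1, x2 (x1 q) ≤ q) :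
    ∀ q ∈ Set.Icc (0:ℝ) 1, x2 (x1 q) = q := by
  -- a globally continuous extension of x1
  set f : ℝ → ℝ := fun q => x1 ((Set.projIcc (0:ℝ) 1 zero_le_one q : Set.Icc (0:ℝ) 1) : ℝ)
    with hfdef
  have hfc : Continuous f :=
    hx1cont.comp_continuous (continuous_subtype_val.comp continuous_projIcc)
      (fun q => (Set.projIcc (0:ℝ) 1 zero_le_one q).2)
  have hfeq : ∀ q ∈ Set.Icc (0:ℝ) 1, f q = x1 q := by
    intro q hq
    simp only [hfdef, Set.projIcc_of_mem zero_le_one hq]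
  -- the generalized inverse s
  set S : ℝ → Set ℝ := fun t => {q | q ∈ Set.Icc (0:ℝ) 1 ∧ x1 q ≤ t} with hSdef
  set s : ℝ → ℝ := fun t => sSup (S t) with hsdef
  have hSbdd : ∀ t, BddAbove (S t) := fun t => ⟨1, fun q hq => hq.1.2⟩
  have hs_le_one : ∀ t, s t ≤ 1 := fun t => Real.sSup_le (fun q hq => hq.1.2) zero_le_one
  have hs_nonneg : ∀ t, 0 ≤ s t := fun t => Real.sSup_nonneg (fun q hq => hq.1.1)
  have hs_mono : Monotone s := by
    intro t t' htt'
    exact Real.sSup_le (fun q hq => le_csSup (hSbdd t') ⟨hq.1, hq.2.trans htt'⟩)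
      (hs_nonneg t')
  -- s is a left inverse of x1
  have hsx1 : ∀ q ∈ Set.Icc (0:ℝ) 1, s (x1 q) = q := by
    intro q hq
    have hSeq : S (x1 q) = Set.Icc 0 q := by
      ext q'
      constructor
      · rintro ⟨hq'Icc, hle⟩
        refine ⟨hq'Icc.1, ?_⟩
        by_contra hlt
        exact absurd (hx1mono hq hq'Icc (not_le.mp hlt)) (not_lt.mpr hle)
      · intro hq'
        have hq'Icc : q' ∈ Set.Icc (0:ℝ) 1 := ⟨hq'.1, hq'.2.trans hq.2⟩
        exact ⟨hq'Icc, hx1mono.monotoneOn hq'Icc hq hq'.2⟩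
    simp only [hsdef, hSeq]
    exact csSup_Icc hq.1
  -- x2 ≤ s on [0,1]
  have hx2s : ∀ t ∈ Set.Icc (0:ℝ) 1, x2 t ≤ s t := by
    intro t ht
    by_contra hlt
    push_neg at hlt
    set q := (s t + x2 t) / 2 with hqdef
    have hq1 : s t < q := by rw [hqdef]; linarith
    have hq2 : q < x2 t := by rw [hqdef]; linarith
    have hqIcc : q ∈ Set.Icc (0:ℝ) 1 :=
      ⟨le_of_lt (lt_of_le_of_lt (hs_nonneg t) hq1), le_of_lt (lt_of_lt_of_le hq2 (hx2maps t ht).2)⟩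
    have hq3 : ¬ (x1 q ≤ t) := by
      intro hle
      exact absurd (le_csSup (hSbdd t) ⟨hqIcc, hle⟩) (not_le.mpr hq1)
    have h4 : x2 t < x2 (x1 q) := hx2mono ht (hx1maps q hqIcc) (not_le.mp hq3)
    exact absurd (h4.trans_le (hcond q hqIcc)) (not_lt.mpr hq2.le)
  -- measure computation
  have hmeas : ∀ t : ℝ, volume ({a : ℝ | t ≤ f a} ∩ Set.Icc 0 1) = ENNReal.ofReal (1 - s t) := by
    intro t
    have hsub1 : Set.Ioc (s t) 1 ⊆ {a : ℝ | t ≤ f a} ∩ Set.Icc 0 1 := by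
      intro a ha
      have haIcc : a ∈ Set.Icc (0:ℝ) 1 := ⟨le_of_lt (lt_of_le_of_lt (hs_nonneg t) ha.1), ha.2⟩
      refine ⟨?_, haIcc⟩
      show t ≤ f a
      rw [hfeq a haIcc]
      by_contra hle
      exact absurd (le_csSup (hSbdd t) ⟨haIcc, (not_le.mp hle).le⟩) (not_le.mpr ha.1)
    have hsub2 : {a : ℝ | t ≤ f a} ∩ Set.Icc 0 1 ⊆ Set.Icc (s t) 1 := by
      rintro a ⟨hta, haIcc⟩
      have hta' : t ≤ x1 a := by
        have h' : t ≤ f a := hta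
        rwa [hfeq a haIcc] at h'
      refine ⟨Real.sSup_le (fun q' hq' => ?_) haIcc.1, haIcc.2⟩
      by_contra hlt
      push_neg at hlt
      have hx : x1 a < x1 q' := hx1mono haIcc hq'.1 hlt
      exact absurd ((hq'.2.trans hta').trans_lt hx) (lt_irrefl _)
    refine le_antisymm ?_ ?_
    · calc volume ({a : ℝ | t ≤ f a} ∩ Set.Icc 0 1) ≤ volume (Set.Icc (s t) 1) :=
            measure_mono hsub2
        _ = ENNReal.ofReal (1 - s t) := Real.volume_Icc
    · calc ENNReal.ofReal (1 - s t) = volume (Set.Ioc (s t) 1) := Real.volume_Ioc.symm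
        _ ≤ volume ({a : ℝ | t ≤ f a} ∩ Set.Icc 0 1) := measure_mono hsub1
  -- integrability facts
  have hsIntInt : IntervalIntegrable s volume 0 1 := hs_mono.intervalIntegrable
  have hx1Int : IntervalIntegrable x1 volume 0 1 := by
    apply ContinuousOn.intervalIntegrable
    rwa [Set.uIcc_of_le zero_le_one]
  have hx2Int : IntervalIntegrable x2 volume 0 1 := by
    apply ContinuousOn.intervalIntegrable
    rwa [Set.uIcc_of_le zero_le_one]
  -- layer cake: ∫₀¹ s = 1 - ∫₀¹ x1
  have hlayer : (∫ t in (0:ℝ)..1, s t) = 1 - ∫ q in (0:ℝ)..1, x1 q := by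
    have f_intble : Integrable f (volume.restrict (Set.Icc (0:ℝ) 1)) :=
      hfc.integrableOn_Icc
    have f_nn : 0 ≤ᵐ[volume.restrict (Set.Icc (0:ℝ) 1)] f :=
      Filter.Eventually.of_forall fun a =>
        (hx1maps _ (Set.projIcc (0:ℝ) 1 zero_le_one a).2).1
    have f_bdd : f ≤ᵐ[volume.restrict (Set.Icc (0:ℝ) 1)] (fun _ => (1:ℝ)) :=
      Filter.Eventually.of_forall fun a =>
        (hx1maps _ (Set.projIcc (0:ℝ) 1 zero_le_one a).2).2
    have key := f_intble.integral_eq_integral_Ioc_meas_le f_nn f_bdd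
    have hLHS : (∫ a, f a ∂(volume.restrict (Set.Icc (0:ℝ) 1))) = ∫ q in (0:ℝ)..1, x1 q := by
      rw [intervalIntegral.integral_of_le zero_le_one, ← integral_Icc_eq_integral_Ioc]
      exact setIntegral_congr_fun measurableSet_Icc (fun a ha => hfeq a ha)
    have hRHS : (∫ t in Set.Ioc (0:ℝ) 1,
        ENNReal.toReal ((volume.restrict (Set.Icc (0:ℝ) 1)) {a : ℝ | t ≤ f a}))
        = ∫ t in Set.Ioc (0:ℝ) 1, (1 - s t) := by
      apply setIntegral_congr_fun measurableSet_Ioc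
      intro t _
      show ((volume.restrict (Set.Icc (0:ℝ) 1)) {a : ℝ | t ≤ f a}).toReal = 1 - s t
      rw [Measure.restrict_apply (measurableSet_le measurable_const hfc.measurable), hmeas t,
        ENNReal.toReal_ofReal (by linarith [hs_le_one t])]
    simp only [Measure.real] at key
    rw [hLHS, hRHS] at key
    rw [← intervalIntegral.integral_of_le zero_le_one] at key
    rw [intervalIntegral.integral_sub intervalIntegrable_const hsIntInt] at key
    simp only [intervalIntegral.integral_const, smul_eq_mul, sub_zero, mul_one] at key
    linarith
  -- ∫₀¹ (s - x2) = 0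
  have hx2val : (∫ t in (0:ℝ)..1, x2 t) = 1 - ∫ q in (0:ℝ)..1, x1 q := by
    rw [intervalIntegral.integral_add hx1Int hx2Int] at hsold
    linarith
  have hzero : (∫ t in (0:ℝ)..1, (s t - x2 t)) = 0 := by
    rw [intervalIntegral.integral_sub hsIntInt hx2Int, hlayer, hx2val]
    ring
  -- conclusion
  intro q hq
  refine le_antisymm (hcond q hq) ?_
  by_contra hlt
  push_neg at hlt
  have hx1qIcc := hx1maps q hq
  have h0le : (0:ℝ) ≤ x2 (x1 q) := (hx2maps _ hx1qIcc).1
  set ε := q - x2 (x1 q) with hεdef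
  have hε : 0 < ε := by rw [hεdef]; linarith
  have hq0 : 0 < q := lt_of_le_of_lt h0le hlt
  set δ := min (ε / 2) q with hδdef
  have hδ : 0 < δ := lt_min (by linarith) hq0
  have hδq : δ ≤ q := min_le_right _ _
  set q₁ := q - δ with hq₁def
  have hq₁Icc : q₁ ∈ Set.Icc (0:ℝ) 1 := ⟨by rw [hq₁def]; linarith, by
    rw [hq₁def]; linarith [hq.2]⟩
  have hq₁lt : q₁ < q := by rw [hq₁def]; linarith
  set a := x1 q₁ with hadef
  set b := x1 q with hbdef
  have haIcc := hx1maps q₁ hq₁Icc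
  have hbIcc := hx1maps q hq
  have hab : a < b := hx1mono hq₁Icc hq hq₁lt
  -- pointwise lower bound on [a,b]
  have hpt : ∀ y ∈ Set.Icc a b, ε / 2 ≤ s y - x2 y := by
    intro y hy
    have hyIcc : y ∈ Set.Icc (0:ℝ) 1 := ⟨haIcc.1.trans hy.1, hy.2.trans hbIcc.2⟩
    have h1 : q₁ ≤ s y := by
      have := hs_mono hy.1
      rwa [hsx1 q₁ hq₁Icc] at this
    have h2 : x2 y ≤ x2 b := hx2mono.monotoneOn hyIcc hbIcc hy.2
    have hδε : δ ≤ ε / 2 := min_le_left _ _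
    have : x2 b = q - ε := by rw [hbdef, hεdef]; ring
    rw [hq₁def] at h1
    linarith
  -- nonnegativity of s - x2 on [0,1]
  have hnn : ∀ y ∈ Set.Icc (0:ℝ) 1, 0 ≤ s y - x2 y := fun y hy => sub_nonneg.2 (hx2s y hy)
  -- integrability on subintervals
  have hgInt : IntervalIntegrable (fun y => s y - x2 y) volume 0 1 := hsIntInt.sub hx2Int
  have hsubab : Set.uIcc a b ⊆ Set.uIcc (0:ℝ) 1 := by
    rw [Set.uIcc_of_le hab.le, Set.uIcc_of_le zero_le_one]
    exact Set.Icc_subset_Icc haIcc.1 hbIcc.2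
  have hsub0a : Set.uIcc (0:ℝ) a ⊆ Set.uIcc (0:ℝ) 1 := by
    rw [Set.uIcc_of_le haIcc.1, Set.uIcc_of_le zero_le_one]
    exact Set.Icc_subset_Icc le_rfl haIcc.2
  have hsubb1 : Set.uIcc b 1 ⊆ Set.uIcc (0:ℝ) 1 := by
    rw [Set.uIcc_of_le hbIcc.2, Set.uIcc_of_le zero_le_one]
    exact Set.Icc_subset_Icc hbIcc.1 le_rfl
  have hgab : IntervalIntegrable (fun y => s y - x2 y) volume a b := hgInt.mono_set hsubab
  have hg0a : IntervalIntegrable (fun y => s y - x2 y) volume 0 a := hgInt.mono_set hsub0a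
  have hgb1 : IntervalIntegrable (fun y => s y - x2 y) volume b 1 := hgInt.mono_set hsubb1
  have hsplit : (∫ y in (0:ℝ)..1, (s y - x2 y)) =
      (∫ y in (0:ℝ)..a, (s y - x2 y)) + (∫ y in a..b, (s y - x2 y))
        + (∫ y in b..(1:ℝ), (s y - x2 y)) := by
    rw [intervalIntegral.integral_add_adjacent_intervals hg0a hgab,
      intervalIntegral.integral_add_adjacent_intervals (hg0a.trans hgab) hgb1]
  have hI1 : 0 ≤ ∫ y in (0:ℝ)..a, (s y - x2 y) :=
    intervalIntegral.integral_nonneg haIcc.1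
      (fun u hu => hnn u ⟨hu.1, hu.2.trans haIcc.2⟩)
  have hI3 : 0 ≤ ∫ y in b..(1:ℝ), (s y - x2 y) :=
    intervalIntegral.integral_nonneg hbIcc.2
      (fun u hu => hnn u ⟨hbIcc.1.trans hu.1, hu.2⟩)
  have hI2 : (b - a) * (ε / 2) ≤ ∫ y in a..b, (s y - x2 y) := by
    have := intervalIntegral.integral_mono_on (μ := volume) hab.le
      intervalIntegrable_const hgab hpt
    rwa [intervalIntegral.integral_const, smul_eq_mul] at this
  have hpos : 0 < (b - a) * (ε / 2) := mul_pos (by linarith) (by linarith)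
  rw [hsplit] at hzero
  linarith
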